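/- Let R be a left n-𝒳-coherent ring, n ≥ 1 an integer, and 𝒳 a class of left R-modules. If {A_i}_{i∈I} is a family of left R-modules, then the direct sum ⊕_{i∈I} A_i is n-𝒳-injective if and only if every A_i is n-𝒳-injective. -/

import Mathlib

/- Common framework: `n`-presented modules, syzygies, special 𝒳-presented modules,
   Ext/Tor vanishing (Tor via a hand-rolled tensor product over a possibly
   noncommutative ring, since Mathlib's tensor product requires commutativity),
   `n`-𝒳-injective / `n`-𝒳-flat modules, and the Gorenstein versions. -/

universe u
open CategoryTheory LinearMap DirectSum

section Basic

variable (R : Type u) [Ring R]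

/-- `U` is an `n`-presented left `R`-module: there is an exact sequence
`F_n → ⋯ → F_0 → U → 0` with each `F_i` finitely generated free. -/
def IsNPresented : ℕ → ModuleCat.{u} R → Prop
  | 0, U => Module.Finite R U
  | n + 1, U => ∃ (F : ModuleCat.{u} R) (f : F →ₗ[R] U),
      Module.Free R F ∧ Module.Finite R F ∧ Function.Surjective f ∧
      IsNPresented n (ModuleCat.of R (LinearMap.ker f))

/-- `K` is a `j`-th syzygy of `U` computed from finitely generated free modules:
`IsSyzygy 0 U K` iff `K ≅ U`, and a `(j+1)`-st syzygy of `U` is a `j`-th syzygy of the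
kernel of a surjection from a finitely generated free module onto `U`. -/
def IsSyzygy : ℕ → ModuleCat.{u} R → ModuleCat.{u} R → Prop
  | 0, U, K => Nonempty (K ≃ₗ[R] U)
  | j + 1, U, K => ∃ (F : ModuleCat.{u} R) (f : F →ₗ[R] U),
      Module.Free R F ∧ Module.Finite R F ∧ Function.Surjective f ∧
      IsSyzygy j (ModuleCat.of R (LinearMap.ker f)) K

/-- `Ext_R^k(U, M) = 0`. -/
noncomputable def ExtVanishes (k : ℕ) (U M : ModuleCat.{u} R) : Prop :=
  Subsingleton (((Ext ℤ (ModuleCat.{u} R) k).obj (Opposite.op U)).obj M)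

variable (𝒳 : Set (ModuleCat.{u} R)) (n : ℕ)

/-- `K` is a special 𝒳-presented module: `K` is the image `K_{n-1} = Im(F_{n-1} → F_{n-2})`
arising from an `n`-presentation of some `U ∈ 𝒳` (with the convention `K = U` when `n = 1`),
i.e. `K` is an `(n-1)`-st syzygy of some `n`-presented `U ∈ 𝒳`. -/
def IsSpecialPresented (K : ModuleCat.{u} R) : Prop :=
  ∃ U ∈ 𝒳, IsNPresented R n U ∧ IsSyzygy R (n - 1) U K

/-- `M` is an `n`-𝒳-injective left `R`-module: `Ext_R^n(U, M) = 0` for every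
`n`-presented `U ∈ 𝒳`. -/
noncomputable def IsNXInjective (M : ModuleCat.{u} R) : Prop :=
  ∀ U ∈ 𝒳, IsNPresented R n U → ExtVanishes R n U M

/-- Projective dimension at most `m`. -/
def ProjDimLE : ℕ → ModuleCat.{u} R → Prop
  | 0, K => Module.Projective R K
  | m + 1, K => ∃ (P : ModuleCat.{u} R) (f : P →ₗ[R] K),
      Module.Projective R P ∧ Function.Surjective f ∧
      ProjDimLE m (ModuleCat.of R (LinearMap.ker f))

/-- Finite projective dimension. -/
def HasFiniteProjDim (K : ModuleCat.{u} R) : Prop := ∃ m, ProjDimLE R m K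

/-- `R` is left `n`-𝒳-coherent: every `n`-presented module in `𝒳` is `(n+1)`-presented. -/
def IsNXCoherent : Prop := ∀ U ∈ 𝒳, IsNPresented R n U → IsNPresented R (n + 1) U

/-- `M` has `n`-𝒳-injective dimension at most `m`:
`Ext_R^{n+i}(U, M) = 0` for all `i ≥ m + 1` and all `n`-presented `U ∈ 𝒳`. -/
noncomputable def NXInjDimLE (m : ℕ) (M : ModuleCat.{u} R) : Prop :=
  ∀ U ∈ 𝒳, IsNPresented R n U → ∀ i : ℕ, m + 1 ≤ i → ExtVanishes R (n + i) U M

/-- `M` has finite `n`-𝒳-injective dimension. -/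
noncomputable def HasFiniteNXInjDim (M : ModuleCat.{u} R) : Prop := ∃ m, NXInjDimLE R 𝒳 n m M

end Basic

section Tensor

variable (R : Type u) [Ring R]

/-- The defining relations of the tensor product `N ⊗_R U` of a right `R`-module `N`
with a left `R`-module `U`, inside `N ⊗_ℤ U`. -/
def tensorRel (N : Type u) [AddCommGroup N] [Module Rᵐᵒᵖ N]
    (U : Type u) [AddCommGroup U] [Module R U] : Submodule ℤ (TensorProduct ℤ N U) :=
  Submodule.span ℤ {x | ∃ (r : R) (a : N) (v : U),
    x = (MulOpposite.op r • a) ⊗ₜ[ℤ] v - a ⊗ₜ[ℤ] (r • v)}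

/-- The tensor product `N ⊗_R U` of a right `R`-module `N` with a left `R`-module `U`
over a (possibly noncommutative) ring `R`, as an abelian group. -/
abbrev RTensor (N : Type u) [AddCommGroup N] [Module Rᵐᵒᵖ N]
    (U : Type u) [AddCommGroup U] [Module R U] : Type u :=
  TensorProduct ℤ N U ⧸ tensorRel R N U

/-- Functoriality of `RTensor` in both variables. -/
noncomputable def rtmap {N N' : Type u} [AddCommGroup N] [Module Rᵐᵒᵖ N]
    [AddCommGroup N'] [Module Rᵐᵒᵖ N']
    {U U' : Type u} [AddCommGroup U] [Module R U] [AddCommGroup U'] [Module R U']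
    (g : N →ₗ[Rᵐᵒᵖ] N') (f : U →ₗ[R] U') :
    RTensor R N U →ₗ[ℤ] RTensor R N' U' :=
  Submodule.mapQ (tensorRel R N U) (tensorRel R N' U')
    (TensorProduct.map g.toAddMonoidHom.toIntLinearMap f.toAddMonoidHom.toIntLinearMap)
    (by
      rw [tensorRel, Submodule.span_le]
      rintro x ⟨r, a, v, rfl⟩
      simp only [SetLike.mem_coe, Submodule.mem_comap, map_sub, TensorProduct.map_tmul,
        AddMonoidHom.coe_toIntLinearMap, LinearMap.toAddMonoidHom_coe]
      apply Submodule.subset_span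
      exact ⟨r, g a, f v, by erw [map_sub, TensorProduct.map_tmul, TensorProduct.map_tmul]; simp [map_smul]⟩)

/-- A left `R`-module `M` is flat if `- ⊗_R M` preserves injections of right `R`-modules. -/
noncomputable def IsFlatModule (M : ModuleCat.{u} R) : Prop :=
  ∀ (A B : ModuleCat.{u} Rᵐᵒᵖ) (i : A →ₗ[Rᵐᵒᵖ] B), Function.Injective i →
    Function.Injective (rtmap R i (LinearMap.id (M := M)))

/-- A right `R`-module `N` is flat if `N ⊗_R -` preserves injections of left `R`-modules. -/
noncomputable def IsFlatRight (N : ModuleCat.{u} Rᵐᵒᵖ) : Prop :=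
  ∀ (A B : ModuleCat.{u} R) (i : A →ₗ[R] B), Function.Injective i →
    Function.Injective (rtmap R (LinearMap.id (M := N)) i)

/-- Flat dimension of a left `R`-module at most `m`. -/
noncomputable def FlatDimLE : ℕ → ModuleCat.{u} R → Prop
  | 0, K => IsFlatModule R K
  | m + 1, K => ∃ (P : ModuleCat.{u} R) (f : P →ₗ[R] K),
      IsFlatModule R P ∧ Function.Surjective f ∧
      FlatDimLE m (ModuleCat.of R (LinearMap.ker f))

/-- Finite flat dimension. -/
noncomputable def HasFiniteFlatDim (K : ModuleCat.{u} R) : Prop := ∃ m, FlatDimLE R m K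

variable (𝒳 : Set (ModuleCat.{u} R)) (n : ℕ)

/-- `Tor^R_k(N, U) = 0` for a right `R`-module `N` and a left `R`-module `U`, `k ≥ 1`:
by dimension shifting this says that for every `(k-1)`-st syzygy `K` of `U` and every
surjection `f : F → K` with `F` free, the induced map `N ⊗ ker f → N ⊗ F` is injective. -/
noncomputable def TorVanishes (k : ℕ) (N : ModuleCat.{u} Rᵐᵒᵖ) (U : ModuleCat.{u} R) : Prop :=
  ∀ (K : ModuleCat.{u} R), IsSyzygy R (k - 1) U K →
    ∀ (F : ModuleCat.{u} R) (f : F →ₗ[R] K), Module.Free R F → Function.Surjective f →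
      Function.Injective
        (rtmap R (LinearMap.id (M := N)) (LinearMap.ker f).subtype)

/-- `N` is an `n`-𝒳-flat right `R`-module: `Tor^R_n(N, U) = 0` for every
`n`-presented `U ∈ 𝒳`. -/
noncomputable def IsNXFlat (N : ModuleCat.{u} Rᵐᵒᵖ) : Prop :=
  ∀ U ∈ 𝒳, IsNPresented R n U → TorVanishes R n N U

/-- `N` has `n`-𝒳-flat dimension at most `m`:
`Tor^R_{n+i}(N, U) = 0` for all `i ≥ m + 1` and all `n`-presented `U ∈ 𝒳`. -/
noncomputable def NXFlatDimLE (m : ℕ) (N : ModuleCat.{u} Rᵐᵒᵖ) : Prop :=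
  ∀ U ∈ 𝒳, IsNPresented R n U → ∀ i : ℕ, m + 1 ≤ i → TorVanishes R (n + i) N U

/-- `N` has finite `n`-𝒳-flat dimension. -/
noncomputable def HasFiniteNXFlatDim (N : ModuleCat.{u} Rᵐᵒᵖ) : Prop := ∃ m, NXFlatDimLE R 𝒳 n m N

end Tensor

section Pure

variable (R : Type u) [Ring R] (𝒳 : Set (ModuleCat.{u} R)) (n : ℕ)

/-- A short exact sequence `0 → A → B → C → 0` of left `R`-modules (given by `i` and `p`)
is special 𝒳-pure if `0 → Hom(K, A) → Hom(K, B) → Hom(K, C) → 0` is exact for every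
special 𝒳-presented module `K`. -/
def IsSpecialXPure {A B C : Type u} [AddCommGroup A] [Module R A] [AddCommGroup B] [Module R B]
    [AddCommGroup C] [Module R C] (i : A →ₗ[R] B) (p : B →ₗ[R] C) : Prop :=
  ∀ K : ModuleCat.{u} R, IsSpecialPresented R 𝒳 n K →
    Function.Injective (fun g : K →ₗ[R] A => i.comp g) ∧
    Function.Exact (fun g : K →ₗ[R] A => i.comp g) (fun g : K →ₗ[R] B => p.comp g) ∧
    Function.Surjective (fun g : K →ₗ[R] B => p.comp g)

/-- A short exact sequence `0 → A → B → C → 0` of right `R`-modules (given by `i` and `p`)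
is special 𝒳-pure if `0 → A ⊗ K → B ⊗ K → C ⊗ K → 0` is exact for every special
𝒳-presented (left `R`-) module `K`. -/
noncomputable def IsSpecialXPureRight {A B C : Type u}
    [AddCommGroup A] [Module Rᵐᵒᵖ A] [AddCommGroup B] [Module Rᵐᵒᵖ B]
    [AddCommGroup C] [Module Rᵐᵒᵖ C] (i : A →ₗ[Rᵐᵒᵖ] B) (p : B →ₗ[Rᵐᵒᵖ] C) : Prop :=
  ∀ K : ModuleCat.{u} R, IsSpecialPresented R 𝒳 n K →
    Function.Injective (rtmap R i (LinearMap.id (M := K))) ∧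
    Function.Exact (rtmap R i (LinearMap.id (M := K))) (rtmap R p (LinearMap.id (M := K))) ∧
    Function.Surjective (rtmap R p (LinearMap.id (M := K)))

/-- `R` is self left `n`-𝒳-injective. -/
noncomputable def IsSelfNXInjective : Prop := IsNXInjective R 𝒳 n (ModuleCat.of R R)

end Pure

section Gorenstein

variable (R : Type u) [Ring R] (𝒳 : Set (ModuleCat.{u} R)) (n : ℕ)

/-- `G` is a Gorenstein `n`-𝒳-injective left `R`-module: there is an exact complex
`⋯ → A_1 → A_0 → A^0 → A^1 → ⋯` of `n`-𝒳-injective modules with `G = ker(A^0 → A^1)`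
which stays exact under `Hom_R(K, -)` for every special 𝒳-presented `K` of finite
projective dimension. -/
noncomputable def IsGorNXInjective (G : ModuleCat.{u} R) : Prop :=
  ∃ (C : ℤ → ModuleCat.{u} R) (d : ∀ i : ℤ, C i →ₗ[R] C (i - 1)),
    (∀ i, IsNXInjective R 𝒳 n (C i)) ∧
    (∀ i : ℤ, Function.Exact (d i) (d (i - 1))) ∧
    Nonempty (G ≃ₗ[R] LinearMap.ker (d 0)) ∧
    (∀ K : ModuleCat.{u} R, IsSpecialPresented R 𝒳 n K → HasFiniteProjDim R K →
      ∀ i : ℤ, Function.Exact (fun g : K →ₗ[R] C i => (d i).comp g)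
        (fun g : K →ₗ[R] C (i - 1) => (d (i - 1)).comp g))

/-- `G` is a Gorenstein `n`-𝒳-flat right `R`-module: there is an exact complex
`⋯ → F_1 → F_0 → F^0 → F^1 → ⋯` of `n`-𝒳-flat right modules with `G = ker(F^0 → F^1)`
which stays exact under `- ⊗_R K` for every special 𝒳-presented `K` of finite
flat dimension. -/
noncomputable def IsGorNXFlat (G : ModuleCat.{u} Rᵐᵒᵖ) : Prop :=
  ∃ (C : ℤ → ModuleCat.{u} Rᵐᵒᵖ) (d : ∀ i : ℤ, C i →ₗ[Rᵐᵒᵖ] C (i - 1)),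
    (∀ i, IsNXFlat R 𝒳 n (C i)) ∧
    (∀ i : ℤ, Function.Exact (d i) (d (i - 1))) ∧
    Nonempty (G ≃ₗ[Rᵐᵒᵖ] LinearMap.ker (d 0)) ∧
    (∀ K : ModuleCat.{u} R, IsSpecialPresented R 𝒳 n K → HasFiniteFlatDim R K →
      ∀ i : ℤ, Function.Exact (rtmap R (d i) (LinearMap.id (M := K)))
        (rtmap R (d (i - 1)) (LinearMap.id (M := K))))

end Gorenstein

section GorensteinAbsolute

/-- `G` is a Gorenstein injective module over `S`: there is an exact complex of injective
modules with `G = ker(E^0 → E^1)` which stays exact under `Hom(I, -)` for every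
injective module `I`. -/
noncomputable def IsGorensteinInjective (S : Type u) [Ring S] (G : ModuleCat.{u} S) : Prop :=
  ∃ (C : ℤ → ModuleCat.{u} S) (d : ∀ i : ℤ, C i →ₗ[S] C (i - 1)),
    (∀ i, Module.Injective S (C i)) ∧
    (∀ i : ℤ, Function.Exact (d i) (d (i - 1))) ∧
    Nonempty (G ≃ₗ[S] LinearMap.ker (d 0)) ∧
    (∀ I : ModuleCat.{u} S, Module.Injective S I →
      ∀ i : ℤ, Function.Exact (fun g : I →ₗ[S] C i => (d i).comp g)
        (fun g : I →ₗ[S] C (i - 1) => (d (i - 1)).comp g))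

/-- `G` is a Gorenstein projective module over `S`: there is an exact complex of projective
modules with `G = ker(P^0 → P^1)` which stays exact under `Hom(-, Q)` for every
projective module `Q`. -/
def IsGorensteinProjective (S : Type u) [Ring S] (G : ModuleCat.{u} S) : Prop :=
  ∃ (C : ℤ → ModuleCat.{u} S) (d : ∀ i : ℤ, C i →ₗ[S] C (i - 1)),
    (∀ i, Module.Projective S (C i)) ∧
    (∀ i : ℤ, Function.Exact (d i) (d (i - 1))) ∧
    Nonempty (G ≃ₗ[S] LinearMap.ker (d 0)) ∧
    (∀ Q : ModuleCat.{u} S, Module.Projective S Q →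
      ∀ i : ℤ, Function.Exact (fun g : C (i - 1 - 1) →ₗ[S] Q => g.comp (d (i - 1)))
        (fun g : C (i - 1) →ₗ[S] Q => g.comp (d i)))

variable (R : Type u) [Ring R]

/-- `G` is a Gorenstein flat left `R`-module: there is an exact complex of flat left modules
with `G = ker(F^0 → F^1)` which stays exact under `E ⊗_R -` for every injective right
`R`-module `E`. -/
noncomputable def IsGorensteinFlatLeft (G : ModuleCat.{u} R) : Prop :=
  ∃ (C : ℤ → ModuleCat.{u} R) (d : ∀ i : ℤ, C i →ₗ[R] C (i - 1)),
    (∀ i, IsFlatModule R (C i)) ∧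
    (∀ i : ℤ, Function.Exact (d i) (d (i - 1))) ∧
    Nonempty (G ≃ₗ[R] LinearMap.ker (d 0)) ∧
    (∀ E : ModuleCat.{u} Rᵐᵒᵖ, Module.Injective Rᵐᵒᵖ E →
      ∀ i : ℤ, Function.Exact (rtmap R (LinearMap.id (M := E)) (d i))
        (rtmap R (LinearMap.id (M := E)) (d (i - 1))))

/-- `G` is a Gorenstein flat right `R`-module: there is an exact complex of flat right modules
with `G = ker(F^0 → F^1)` which stays exact under `- ⊗_R E` for every injective left
`R`-module `E`. -/
noncomputable def IsGorensteinFlatRight (G : ModuleCat.{u} Rᵐᵒᵖ) : Prop :=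
  ∃ (C : ℤ → ModuleCat.{u} Rᵐᵒᵖ) (d : ∀ i : ℤ, C i →ₗ[Rᵐᵒᵖ] C (i - 1)),
    (∀ i, IsFlatRight R (C i)) ∧
    (∀ i : ℤ, Function.Exact (d i) (d (i - 1))) ∧
    Nonempty (G ≃ₗ[Rᵐᵒᵖ] LinearMap.ker (d 0)) ∧
    (∀ E : ModuleCat.{u} R, Module.Injective R E →
      ∀ i : ℤ, Function.Exact (rtmap R (d i) (LinearMap.id (M := E)))
        (rtmap R (d (i - 1)) (LinearMap.id (M := E))))

end GorensteinAbsolute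
noncomputable section AuxST4
open CategoryTheory Limits
variable {R : Type u} [Ring R]

abbrev augX (F : ModuleCat.{u} R) (Q : ChainComplex (ModuleCat.{u} R) ℕ) : ℕ → ModuleCat.{u} R
  | 0 => F
  | j+1 => Q.X j

variable {U F : ModuleCat.{u} R} (f : F →ₗ[R] U)

def g0 (Q : ProjectiveResolution (ModuleCat.of R (LinearMap.ker f))) :
    Q.complex.X 0 ⟶ ModuleCat.of R (LinearMap.ker f) :=
  ((ChainComplex.toSingle₀Equiv Q.complex (ModuleCat.of R (LinearMap.ker f))) Q.π).1

lemma g0_surj (Q : ProjectiveResolution (ModuleCat.of R (LinearMap.ker f))) :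
    Function.Surjective (g0 f Q) := by
  have h : Epi (Q.π.f 0) := inferInstance
  rw [← ModuleCat.epi_iff_surjective]
  exact h

lemma g0_exact (Q : ProjectiveResolution (ModuleCat.of R (LinearMap.ker f)))
    (x : Q.complex.X 0) (hx : g0 f Q x = 0) : ∃ y, Q.complex.d 1 0 y = x := by
  have := Q.exact₀
  rw [ShortComplex.moduleCat_exact_iff] at this
  exact this x hx

lemma g0_d (Q : ProjectiveResolution (ModuleCat.of R (LinearMap.ker f))) :
    Q.complex.d 1 0 ≫ g0 f Q = 0 :=
  ((ChainComplex.toSingle₀Equiv Q.complex (ModuleCat.of R (LinearMap.ker f))) Q.π).2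

def augComplex (Q : ProjectiveResolution (ModuleCat.of R (LinearMap.ker f))) :
    ChainComplex (ModuleCat.{u} R) ℕ :=
  ChainComplex.of (augX F Q.complex)
    (fun n => match n with
      | 0 => g0 f Q ≫ ModuleCat.ofHom (LinearMap.ker f).subtype
      | n+1 => Q.complex.d (n+1) n)
    (by
      rintro (_|n)
      · show (Q.complex.d 1 0 ≫ g0 f Q) ≫ ModuleCat.ofHom (LinearMap.ker f).subtype = 0
        rw [g0_d, Limits.zero_comp]
      · exact Q.complex.d_comp_d _ _ _)

lemma augComplex_d0 (Q : ProjectiveResolution (ModuleCat.of R (LinearMap.ker f))) :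
    (augComplex f Q).d 1 0 = g0 f Q ≫ ModuleCat.ofHom (LinearMap.ker f).subtype := by
  simp [augComplex, ChainComplex.of.d]

lemma augComplex_d_succ (Q : ProjectiveResolution (ModuleCat.of R (LinearMap.ker f))) (n : ℕ) :
    (augComplex f Q).d (n+2) (n+1) = Q.complex.d (n+1) n := by
  simp [augComplex, ChainComplex.of.d]

lemma augComplex_X0 (Q : ProjectiveResolution (ModuleCat.of R (LinearMap.ker f))) :
    (augComplex f Q).X 0 = F := rfl

lemma augComplex_X_succ (Q : ProjectiveResolution (ModuleCat.of R (LinearMap.ker f))) (n : ℕ) :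
    (augComplex f Q).X (n+1) = Q.complex.X n := rfl

lemma augComplex_exactAt_succ (Q : ProjectiveResolution (ModuleCat.of R (LinearMap.ker f))) (n : ℕ) :
    (augComplex f Q).ExactAt (n+1) := by
  rw [HomologicalComplex.exactAt_iff' _ (n + 2) (n + 1) n (by simp) (by simp),
    ShortComplex.moduleCat_exact_iff]
  intro x hx
  match n with
  | 0 =>
    have hx2 : ((augComplex f Q).d 1 0) x = 0 := hx
    rw [augComplex_d0] at hx2
    have hx3 : g0 f Q x = 0 := Subtype.ext hx2
    obtain ⟨y, hy⟩ := g0_exact f Q x hx3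
    refine ⟨y, ?_⟩
    show ((augComplex f Q).d 2 1) y = x
    rw [augComplex_d_succ]
    exact hy
  | n+1 =>
    have hx2 : Q.complex.d (n+1) n x = 0 := by
      rw [← augComplex_d_succ f Q n]; exact hx
    have h := Q.exact_succ n
    rw [ShortComplex.moduleCat_exact_iff] at h
    obtain ⟨y, hy⟩ := h x hx2
    refine ⟨y, ?_⟩
    show ((augComplex f Q).d (n+3) (n+2)) y = x
    rw [augComplex_d_succ f Q (n+1)]
    exact hy

lemma augπ_cond (Q : ProjectiveResolution (ModuleCat.of R (LinearMap.ker f))) :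
    (augComplex f Q).d 1 0 ≫ ModuleCat.ofHom f = 0 := by
  rw [augComplex_d0]
  ext x
  exact (g0 f Q x).2

def augπ (Q : ProjectiveResolution (ModuleCat.of R (LinearMap.ker f))) :
    augComplex f Q ⟶ (ChainComplex.single₀ (ModuleCat.{u} R)).obj U :=
  (ChainComplex.toSingle₀Equiv _ _).symm ⟨ModuleCat.ofHom f, augπ_cond f Q⟩

lemma augπ_f0 (Q : ProjectiveResolution (ModuleCat.of R (LinearMap.ker f))) :
    (augπ f Q).f 0 = ModuleCat.ofHom f :=
  ChainComplex.toSingle₀Equiv_symm_apply_f_zero _ _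

def augRes (hF : Projective F) (hf : Function.Surjective f)
    (Q : ProjectiveResolution (ModuleCat.of R (LinearMap.ker f))) :
    ProjectiveResolution U where
  complex := augComplex f Q
  projective := fun n => match n with
    | 0 => hF
    | n+1 => Q.projective n
  π := augπ f Q
  quasiIso := ⟨fun n => by
    cases n with
    | zero =>
      rw [ChainComplex.quasiIsoAt₀_iff, ShortComplex.quasiIso_iff_of_zeros' _ rfl rfl rfl]
      have hτ : ((HomologicalComplex.shortComplexFunctor' (ModuleCat.{u} R)
          (ComplexShape.down ℕ) 1 0 0).map (augπ f Q)).τ₂ = ModuleCat.ofHom f :=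
        augπ_f0 f Q
      constructor
      · rw [ShortComplex.moduleCat_exact_iff]
        intro x hx
        have hx' : f x = 0 := (LinearMap.congr_fun (congrArg ModuleCat.Hom.hom hτ) x).symm.trans hx
        obtain ⟨y, hy⟩ := g0_surj f Q ⟨x, hx'⟩
        refine ⟨y, ?_⟩
        show ((augComplex f Q).d 1 0) y = x
        rw [augComplex_d0]
        show ((LinearMap.ker f).subtype) (g0 f Q y) = x
        rw [hy]
        rfl
      · rw [hτ]
        exact (ModuleCat.epi_iff_surjective _).2 hf
    | succ n =>
      rw [quasiIsoAt_iff_exactAt']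
      · exact augComplex_exactAt_succ f Q n
      · apply ChainComplex.exactAt_succ_single_obj⟩

lemma exists_res (n : ℕ) (U : ModuleCat.{u} R) (hU : IsNPresented R n U) :
    ∃ P : ProjectiveResolution U, Module.Finite R (P.complex.X n) := by
  induction n generalizing U with
  | zero =>
    have : Module.Finite R U := hU
    obtain ⟨k, s, hs⟩ := Module.Finite.exists_fin (R := R) (M := U)
    let F : ModuleCat.{u} R := ModuleCat.of R (Fin k → R)
    let f : F →ₗ[R] U := (Pi.basisFun R (Fin k)).constr ℕ s
    have hf : Function.Surjective f := by
      rw [← LinearMap.range_eq_top]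
      show LinearMap.range ((Pi.basisFun R (Fin k)).constr ℕ s) = ⊤
      rw [Module.Basis.constr_range]
      exact hs
    have hproj : Projective F := ModuleCat.projective_of_free (Pi.basisFun R (Fin k))
    refine ⟨augRes f hproj hf (ProjectiveResolution.of _), ?_⟩
    show Module.Finite R (Fin k → R)
    infer_instance
  | succ n ih =>
    obtain ⟨F, f, hfree, hfin, hsurj, hker⟩ := hU
    obtain ⟨Q, hQ⟩ := ih _ hker
    have hproj : Projective F := ModuleCat.projective_of_free (Module.Free.chooseBasis R F)
    exact ⟨augRes f hproj hsurj Q, hQ⟩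

lemma moduleCat_isZero_iff {S : Type*} [Ring S] (N : ModuleCat.{u} S) :
    IsZero N ↔ Subsingleton N := by
  constructor
  · intro h
    have h0 : (𝟙 N : N ⟶ N) = 0 := h.eq_of_src _ _
    refine ⟨fun a b => ?_⟩
    have ha : a = (𝟙 N : N ⟶ N) a := rfl
    have hb : b = (𝟙 N : N ⟶ N) b := rfl
    rw [ha, hb, h0]
    simp
  · intro h
    exact ModuleCat.isZero_of_subsingleton N

lemma iso_subsingleton_iff {S : Type*} [Ring S] {A B : ModuleCat.{u} S} (e : A ≅ B) :
    Subsingleton A ↔ Subsingleton B :=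
  (Iso.toEquiv ((forget (ModuleCat S)).mapIso e)).subsingleton_congr

lemma ext_subsingleton_iff {U : ModuleCat.{u} R} (P : ProjectiveResolution U)
    (M : ModuleCat.{u} R) (m : ℕ) :
    Subsingleton (((Ext ℤ (ModuleCat.{u} R) (m+1)).obj (Opposite.op U)).obj M) ↔
    ∀ g : P.complex.X (m+1) ⟶ M, P.complex.d (m+2) (m+1) ≫ g = 0 →
      ∃ h : P.complex.X m ⟶ M, P.complex.d (m+1) m ≫ h = g := by
  rw [iso_subsingleton_iff (ProjectiveResolution.isoExt (R := ℤ) P (m+1) M), ← moduleCat_isZero_iff,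
    ← HomologicalComplex.exactAt_iff_isZero_homology,
    HomologicalComplex.exactAt_iff' _ m (m+1) (m+2) (by simp) (by simp),
    ShortComplex.moduleCat_exact_iff]
  constructor
  · intro h g hg
    obtain ⟨h', hh'⟩ := h g (by
      show ((P.complex.linearYonedaObj ℤ M).d (m+1) (m+2)) g = 0
      rw [ChainComplex.linearYonedaObj_d]
      exact hg)
    refine ⟨h', ?_⟩
    have := hh'
    rw [show ((HomologicalComplex.sc' (P.complex.linearYonedaObj ℤ M) m (m+1) (m+2)).f) =
      (P.complex.linearYonedaObj ℤ M).d m (m+1) from rfl, ChainComplex.linearYonedaObj_d] at this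
    exact this
  · intro h g hg
    rw [show ((HomologicalComplex.sc' (P.complex.linearYonedaObj ℤ M) m (m+1) (m+2)).g) =
      (P.complex.linearYonedaObj ℤ M).d (m+1) (m+2) from rfl, ChainComplex.linearYonedaObj_d] at hg
    obtain ⟨h', hh'⟩ := h g hg
    refine ⟨h', ?_⟩
    show ((P.complex.linearYonedaObj ℤ M).d m (m+1)) h' = g
    rw [ChainComplex.linearYonedaObj_d]
    exact hh'

end AuxST4

/-- over a left `n`-𝒳-coherent ring, a direct sum `⊕_{i ∈ I} A_i` is
`n`-𝒳-injective iff every `A_i` is `n`-𝒳-injective. -/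
theorem statement_4 (R : Type u) [Ring R] (𝒳 : Set (ModuleCat.{u} R)) (n : ℕ) (hn : 1 ≤ n)
    (hcoh : IsNXCoherent R 𝒳 n) (I : Type u) (A : I → ModuleCat.{u} R) :
    IsNXInjective R 𝒳 n (ModuleCat.of R (⨁ i, ↥(A i))) ↔
      ∀ i, IsNXInjective R 𝒳 n (A i)  := by
  classical
  constructor
  · intro hsum i U hUmem hUn
    have hsub : Subsingleton (((Ext ℤ (ModuleCat.{u} R) n).obj (Opposite.op U)).obj
        (ModuleCat.of R (⨁ i, ↥(A i)))) := hsum U hUmem hUn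
    show Subsingleton _
    let E := (Ext ℤ (ModuleCat.{u} R) n).obj (Opposite.op U)
    let ι : A i ⟶ ModuleCat.of R (⨁ j, ↥(A j)) :=
      ModuleCat.ofHom (DirectSum.lof R I (fun j => ↥(A j)) i)
    let π : ModuleCat.of R (⨁ j, ↥(A j)) ⟶ A i :=
      ModuleCat.ofHom (DirectSum.component R I (fun j => ↥(A j)) i)
    have hcomp : ι ≫ π = 𝟙 (A i) := by
      refine ModuleCat.hom_ext (LinearMap.ext fun x => ?_)
      exact DirectSum.component.lof_self (R := R) (ι := I) (M := fun j => ↥(A j)) i x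
    have h1 : E.map ι ≫ E.map π = 𝟙 _ := by rw [← E.map_comp, hcomp, E.map_id]
    refine ⟨fun x y => ?_⟩
    have hx : (E.map π) ((E.map ι) x) = x :=
      congrArg (fun (t : E.obj (A i) ⟶ E.obj (A i)) => t x) h1
    have hy : (E.map π) ((E.map ι) y) = y :=
      congrArg (fun (t : E.obj (A i) ⟶ E.obj (A i)) => t y) h1
    have hxy : (E.map ι) x = (E.map ι) y := Subsingleton.elim _ _
    rw [← hx, ← hy, hxy]
  · intro hA U hUmem hUn
    obtain ⟨m, rfl⟩ : ∃ m, n = m + 1 := ⟨n - 1, by omega⟩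
    obtain ⟨P, hfin⟩ := exists_res (m + 1) U hUn
    show Subsingleton _
    rw [ext_subsingleton_iff P]
    intro g hg
    have hAi : ∀ (i : I) (g' : P.complex.X (m+1) ⟶ A i),
        P.complex.d (m+2) (m+1) ≫ g' = 0 →
        ∃ h', P.complex.d (m+1) m ≫ h' = g' :=
      fun i => (ext_subsingleton_iff P (A i) m).1 (hA i U hUmem hUn)
    obtain ⟨s, hs⟩ := Module.finite_def.mp hfin
    let S : Finset I := s.sup fun x => (g x : ⨁ j, ↥(A j)).support
    let gc : ∀ j : I, (P.complex.X (m+1) ⟶ A j) := fun j =>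
      g ≫ ModuleCat.ofHom (DirectSum.component R I (fun j => ↥(A j)) j)
    have hgcd : ∀ j, P.complex.d (m+2) (m+1) ≫ gc j = 0 := by
      intro j
      show P.complex.d (m+2) (m+1) ≫
        (g ≫ ModuleCat.ofHom (DirectSum.component R I (fun j => ↥(A j)) j)) = 0
      rw [← Category.assoc, hg, Limits.zero_comp]
    have hgc0 : ∀ j, j ∉ S → gc j = 0 := by
      intro j hj
      refine ModuleCat.hom_ext (LinearMap.ext_on hs fun x hx => ?_)
      have hj2 : j ∉ (g x : ⨁ j, ↥(A j)).support := fun hmem =>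
        hj (Finset.le_sup (f := fun x => (g x : ⨁ j, ↥(A j)).support) hx hmem)
      have hvj : ∀ v : ⨁ j, ↥(A j), j ∉ v.support →
          DirectSum.component R I (fun j => ↥(A j)) j v = 0 :=
        fun v hv => DFinsupp.notMem_support_iff.mp hv
      exact hvj (g x) hj2
    choose h' hh' using fun j => hAi j (gc j) (hgcd j)
    refine ⟨∑ j ∈ S, h' j ≫ ModuleCat.ofHom (DirectSum.lof R I (fun j => ↥(A j)) j), ?_⟩
    refine ModuleCat.hom_ext (LinearMap.ext fun x => ?_)
    have extel : ∀ v w : ⨁ j, ↥(A j),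
        (∀ j, DirectSum.component R I (fun j => ↥(A j)) j v
          = DirectSum.component R I (fun j => ↥(A j)) j w) → v = w :=
      fun v w hc => DFunLike.ext _ _ hc
    refine extel _ _ fun j => ?_
    show DirectSum.component R I (fun j => ↥(A j)) j
        ((P.complex.d (m+1) m ≫ ∑ j ∈ S, h' j ≫
          ModuleCat.ofHom (DirectSum.lof R I (fun j => ↥(A j)) j)) x)
      = DirectSum.component R I (fun j => ↥(A j)) j (g x)
    have lhs1 : (P.complex.d (m+1) m ≫ ∑ j ∈ S, h' j ≫
          ModuleCat.ofHom (DirectSum.lof R I (fun j => ↥(A j)) j)) x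
        = ∑ i ∈ S, (DirectSum.lof R I (fun j => ↥(A j)) i)
            (h' i (P.complex.d (m+1) m x)) := by
      show (∑ j ∈ S, h' j ≫ ModuleCat.ofHom (DirectSum.lof R I (fun j => ↥(A j)) j))
          (P.complex.d (m+1) m x) = _
      change (ModuleCat.Hom.hom (∑ j ∈ S, h' j ≫ ModuleCat.ofHom (DirectSum.lof R I (fun j => ↥(A j)) j) :
          P.complex.X m ⟶ ModuleCat.of R (⨁ i, ↥(A i))))
          (P.complex.d (m+1) m x) = _
      rw [ModuleCat.hom_sum, LinearMap.coe_sum, Finset.sum_apply]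
      rfl
    rw [lhs1, map_sum]
    have term : ∀ i, DirectSum.component R I (fun j => ↥(A j)) j
        ((DirectSum.lof R I (fun j => ↥(A j)) i) (h' i (P.complex.d (m+1) m x)))
        = if h : i = j then Eq.recOn h (h' i (P.complex.d (m+1) m x)) else 0 := fun i =>
      DirectSum.component.of (R := R) (ι := I) (M := fun j => ↥(A j)) j i _
    rw [Finset.sum_congr rfl fun i _ => term i, Finset.sum_dite_eq']
    have rhs1 : DirectSum.component R I (fun j => ↥(A j)) j (g x) = gc j x := rfl
    rw [rhs1]
    by_cases hj : j ∈ S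
    · rw [if_pos hj]
      exact congrArg (fun (t : P.complex.X (m+1) ⟶ A j) => t x) (hh' j)
    · rw [if_neg hj, hgc0 j hj]
      rfl
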